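/- For every real q ≠ 1, every d ≥ 1, and all positive reals x₁, ..., x_d: ln_q(x₁·x₂·...·x_d) = Σ_{k=1}^{d} (1−q)^{k−1} · Σ_{S ⊆ {1,...,d}, |S| = k} ∏_{i∈S} ln_q x_i. In particular, applied to the expanding eigenvalue moduli of a hyperbolic automorphism, the q-logarithm of the volume expansion rate ln_q(∏_{β=1}^{d}|λ_β|) expands into the sum of terms of all orders in the individual sub-entropies ln_q|λ_i|, with coefficient (1−q)^{k−1} in front of the order-k terms, identical in structure with the linear combination h(T) + r₂(T) + ... + r_d(T) of extended entropies. -/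

import Mathlib

/-- The `q`-deformed logarithm: `ln_q x = (x^(1-q) - 1)/(1-q)` (real power). -/
noncomputable def lnq (q x : ℝ) : ℝ := (x ^ (1 - q) - 1) / (1 - q)

/-- For every real `q ≠ 1`, every `d ≥ 1` and all positive reals
`x₁, ..., x_d`:
`ln_q (x₁ ⋯ x_d) = ∑_{k=1}^{d} (1-q)^(k-1) ∑_{S ⊆ {1,...,d}, |S| = k} ∏_{i ∈ S} ln_q xᵢ`.
Applied to expanding eigenvalue moduli, the `q`-logarithm of the volume expansion rate
expands into terms of all orders in the sub-entropies `ln_q |λ_i|`, with coefficient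
`(1-q)^(k-1)` in front of the order-`k` terms. -/
theorem lnq_prod_expansion (q : ℝ) (hq : q ≠ 1) (d : ℕ) (hd : 1 ≤ d)
    (x : Fin d → ℝ) (hx : ∀ i, 0 < x i) :
    lnq q (∏ i, x i)
      = ∑ k ∈ Finset.Icc 1 d, (1 - q) ^ (k - 1) *
          ∑ S ∈ Finset.univ.powerset.filter (fun S : Finset (Fin d) => S.card = k),
            ∏ i ∈ S, lnq q (x i) := by
  have hε0 : (1 - q) ≠ 0 := sub_ne_zero.mpr (Ne.symm hq)
  set ε := 1 - q with hε
  set l : Fin d → ℝ := fun i => lnq q (x i) with hl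
  -- key expansion of the product power
  have key : (∏ i, x i) ^ ε
      = ∑ t ∈ (Finset.univ : Finset (Fin d)).powerset, ε ^ t.card * ∏ i ∈ t, l i := by
    rw [← Real.finset_prod_rpow _ _ (fun i _ => (hx i).le)]
    have h1 : ∀ i ∈ (Finset.univ : Finset (Fin d)), (x i) ^ ε = ε * l i + 1 := by
      intro i _
      simp only [hl, lnq, hε]
      field_simp
      ring
    rw [Finset.prod_congr rfl h1, Finset.prod_add]
    refine Finset.sum_congr rfl fun t _ => ?_
    simp [Finset.prod_mul_distrib, mul_comm]
  -- fiberwise decomposition of the powerset sum by cardinality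
  have fib : ∑ t ∈ (Finset.univ : Finset (Fin d)).powerset, ε ^ t.card * ∏ i ∈ t, l i
      = ∑ k ∈ Finset.range (d + 1),
          ∑ t ∈ (Finset.univ : Finset (Fin d)).powerset.filter (fun t => t.card = k),
            ε ^ t.card * ∏ i ∈ t, l i := by
    rw [Finset.sum_fiberwise_of_maps_to]
    intro t ht
    simp only [Finset.mem_powerset] at ht
    have := Finset.card_le_card ht
    simp only [Finset.card_univ, Fintype.card_fin] at this
    simp [Nat.lt_succ_iff, this]
  have fib2 : ∀ k, ∑ t ∈ (Finset.univ : Finset (Fin d)).powerset.filter (fun t => t.card = k),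
            ε ^ t.card * ∏ i ∈ t, l i
      = ε ^ k * ∑ t ∈ (Finset.univ : Finset (Fin d)).powerset.filter (fun t => t.card = k),
          ∏ i ∈ t, l i := by
    intro k
    rw [Finset.mul_sum]
    refine Finset.sum_congr rfl fun t ht => ?_
    simp only [Finset.mem_filter] at ht
    rw [ht.2]
  -- split off k = 0
  have range_split : Finset.range (d + 1) = insert 0 (Finset.Icc 1 d) := by
    ext k
    simp [Nat.lt_succ_iff, Nat.one_le_iff_ne_zero, or_iff_not_imp_left]
    omega
  have h0 : (Finset.univ : Finset (Fin d)).powerset.filter (fun t => t.card = 0) = {∅} := by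
    ext t
    simp [Finset.card_eq_zero]
  have main : (∏ i, x i) ^ ε = 1 + ∑ k ∈ Finset.Icc 1 d,
      ε ^ k * ∑ t ∈ (Finset.univ : Finset (Fin d)).powerset.filter (fun t => t.card = k),
          ∏ i ∈ t, l i := by
    rw [key, fib, range_split, Finset.sum_insert (by simp)]
    simp only [fib2]
    rw [h0]
    simp
  -- conclude
  rw [lnq, ← hε, main]
  rw [add_sub_cancel_left, Finset.sum_div]
  refine Finset.sum_congr rfl fun k hk => ?_
  simp only [Finset.mem_Icc] at hk
  have hpow : ε ^ k = ε ^ (k - 1) * ε := by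
    rw [← pow_succ]; congr 1; omega
  rw [hpow, mul_comm (ε ^ (k - 1)) ε, mul_assoc, mul_comm ε, mul_div_assoc,
    div_self hε0, mul_one]
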